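/- Let t, l, r, b form a cartesian (pullback) square of finite sets with top t : I → J, left l : I → K, right r : J → L, bottom b : K → L. With V(h) denoting the map sending an element to the singleton symmetric list on its image under h, and U(h) := D(V(h)) the dualized map, the two Kleisli composites U(r) ∘ V(b) and V(t) ∘ U(l) (as functions K → SList(J)) are pointwise isomorphic as symmetric lists: for every k ∈ K, the underlying multisets of (U(r) ∘ V(b))(k) and (V(t) ∘ U(l))(k) both equal the fiber r^{-1}({b(k)}), and since both symmetric lists are linear, there is a unique isomorphism between them. -/

import Mathlib

universe u

open CategoryTheory

namespace SListDev

/-- A wrapper around `List C`, serving as the type of objects of the quiver generating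
the category of symmetric lists. -/
structure SL (C : Type u) where
  toList : List C

variable {C : Type u}

/-- Consing an element onto a symmetric-list object. -/
def SL.cons (z : C) (a : SL C) : SL C := ⟨z :: a.toList⟩

/-- Generating morphisms for the category of symmetric lists: adjacent swaps and
cons of a generating morphism. -/
inductive Gen : SL C → SL C → Type u
  | swap (x y : C) (l : List C) : Gen ⟨x :: y :: l⟩ ⟨y :: x :: l⟩
  | cons (z : C) {l l' : List C} : Gen ⟨l⟩ ⟨l'⟩ → Gen ⟨z :: l⟩ ⟨z :: l'⟩

instance : Quiver (SL C) := ⟨Gen⟩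

/-- The free category on the generating quiver of symmetric lists. -/
abbrev FreeSL (C : Type u) := Paths (SL C)

/-- The extension of the `cons` operation to paths. -/
def consMap (z : C) : ∀ {a b : SL C}, Quiver.Path a b → Quiver.Path (SL.cons z a) (SL.cons z b)
  | _, _, Quiver.Path.nil => Quiver.Path.nil
  | _, _, Quiver.Path.cons p g => (consMap z p).cons (Gen.cons z g)

/-- The path consisting of a single swap. -/
def swapPath (x y : C) (l : List C) :
    Quiver.Path (⟨x :: y :: l⟩ : SL C) (⟨y :: x :: l⟩ : SL C) :=
  Quiver.Hom.toPath (Gen.swap x y l)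

/-- The relations defining the category of symmetric lists: naturality of the swap,
the symmetry relation, the hexagon (Yang–Baxter) relation, and functoriality
(congruence) of `cons`. -/
inductive Rel : HomRel (FreeSL C)
  | swap_naturality (X Y : C) {l l' : SL C} (f : Quiver.Path l l') :
      Rel ((swapPath X Y l.toList).comp (consMap Y (consMap X f)))
          ((consMap X (consMap Y f)).comp (swapPath X Y l'.toList))
  | swap_swap (X Y : C) (l : List C) :
      Rel ((swapPath X Y l).comp (swapPath Y X l)) Quiver.Path.nil
  | hexagon (X Y Z : C) (l : List C) :
      Rel ((swapPath X Y (Z :: l)).comp ((consMap Y (swapPath X Z l)).comp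
            (swapPath Y Z (X :: l))))
          ((consMap X (swapPath Y Z l)).comp ((swapPath X Z (Y :: l)).comp
            (consMap Z (swapPath X Y l))))
  | cons (z : C) {l l' : SL C} (f f' : Quiver.Path l l') :
      Rel f f' → Rel (consMap z f) (consMap z f')

end SListDev

/-- The category of symmetric lists on `C`, presented by generators and relations. -/
abbrev SList (C : Type u) := CategoryTheory.Quotient (SListDev.Rel (C := C))

namespace SList

variable {C : Type u}

/-- The symmetric list attached to a list. -/
def mk (l : List C) : SList C := ⟨⟨l⟩⟩

/-- The underlying list of a symmetric list. -/
def toList (L : SList C) : List C := L.as.toList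

/-- The length of a symmetric list. -/
def length (L : SList C) : ℕ := L.toList.length

/-- The underlying multiset of a symmetric list. -/
def mult (L : SList C) : Multiset C := (L.toList : Multiset C)

end SList

/-- The action on objects of the duality functor
`D_{J,K} : (SList K)^J → (SList J)^K` (defined as the composite of the equivalence of
symmetric lists with finite types over the base, the fiber equivalence, and the flip of
variables): the value of `D_{J,K}(X)` at `k` is the symmetric list of those `j ∈ J`,
each appearing with multiplicity `count(k, ‖X j‖)`. -/
noncomputable def SList.dualObj {J K : Type u} [Fintype J] [DecidableEq K]
    (X : J → SList K) : K → SList J := fun k =>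
  SList.mk ((Finset.univ : Finset J).toList.flatMap fun j =>
    List.replicate ((X j).mult.count k) j)

/-- `V(h) : A → SList B` sends `a` to the singleton symmetric list `[h a]`. -/
def SList.Vmap {A B : Type u} (h : A → B) : A → SList B := fun a => SList.mk [h a]

/-- `U(h) := D_{A,B}(V(h))` is the dualized map. -/
noncomputable def SList.Umap {A B : Type u} [Fintype A] [DecidableEq B]
    (h : A → B) : B → SList A := SList.dualObj (SList.Vmap h)

/-- The action on objects of the symmetric monoidal extension `Θ_g` of `g : K → SList L`. -/
def SList.thetaObj {K L : Type u} (g : K → SList L) (X : SList K) : SList L :=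
  SList.mk (X.toList.flatMap fun k => (g k).toList)

namespace SListAux

open SListDev CategoryTheory

variable {C : Type u}

@[simp] lemma consMap_nil (z : C) {b : SL C} :
    consMap z (Quiver.Path.nil : Quiver.Path b b) = Quiver.Path.nil := by simp [consMap]

@[simp] lemma consMap_cons (z : C) {a b c : SL C} (p : Quiver.Path a b) (g : b ⟶ c) :
    consMap z (p.cons g) = (consMap z p).cons (Gen.cons z g) := by simp [consMap]; rfl

/-- insert `x` at position `i` (clamped). -/
def insertL : ℕ → C → List C → List C
  | 0, x, l => x :: l
  | _+1, x, [] => [x]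
  | i+1, x, a :: t => a :: insertL i x t

lemma insertL_perm (x : C) : ∀ (i : ℕ) (l : List C), (insertL i x l).Perm (x :: l)
  | 0, l => List.Perm.refl _
  | _+1, [] => List.Perm.refl _
  | i+1, a :: t =>
      ((insertL_perm x i t).cons a).trans (List.Perm.swap x a t)

lemma insertL_inj (x : C) : ∀ (i i' : ℕ) (l l' : List C), i ≤ l.length → i' ≤ l'.length →
    x ∉ l → x ∉ l' → insertL i x l = insertL i' x l' → i = i' ∧ l = l'
  | 0, 0, l, l', _, _, _, _, h => by
      simp only [insertL] at h; cases h; exact ⟨rfl, rfl⟩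
  | 0, i'+1, l, [], _, hi', _, _, h => by simp at hi'
  | 0, i'+1, l, a :: t', _, _, hx, hx', h => by
      simp only [insertL] at h
      cases h
      exact absurd List.mem_cons_self hx'
  | i+1, 0, [], l', hi, _, _, _, h => by simp at hi
  | i+1, 0, a :: t, l', _, _, hx, hx', h => by
      simp only [insertL] at h
      cases h
      exact absurd List.mem_cons_self hx
  | i+1, i'+1, [], l', hi, _, _, _, _ => by simp at hi
  | i+1, i'+1, a :: t, [], _, hi', _, _, _ => by simp at hi'
  | i+1, i'+1, a :: t, a' :: t', hi, hi', hx, hx', h => by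
      simp only [insertL, List.cons.injEq] at h
      obtain ⟨rfl, h⟩ := h
      have := insertL_inj x i i' t t' (by simpa using hi) (by simpa using hi')
        (fun hm => hx (List.mem_cons_of_mem _ hm)) (fun hm => hx' (List.mem_cons_of_mem _ hm)) h
      exact ⟨by omega, by rw [this.2]⟩

/-- The path moving the head `x` down to position `i`. -/
def downPath (x : C) : (i : ℕ) → (l : List C) → Quiver.Path (⟨x :: l⟩ : SL C) ⟨insertL i x l⟩
  | 0, _ => Quiver.Path.nil
  | _+1, [] => Quiver.Path.nil
  | i+1, a :: t => (swapPath x a t).comp (consMap a (downPath x i t))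

lemma consMap_comp (z : C) {a b c : SL C} (p : Quiver.Path a b) (q : Quiver.Path b c) :
    consMap z (p.comp q) = (consMap z p).comp (consMap z q) := by
  induction q with
  | nil => simp
  | cons q g ih => simp [ih]; rfl

instance categoryFreeSL : Category.{u} (FreeSL.{u} C) := Paths.categoryPaths.{u, u} (SL.{u} C)

/-- The quotient functor from the free category to the category of symmetric lists. -/
abbrev QF : FreeSL C ⥤ SList C := CategoryTheory.Quotient.functor (SListDev.Rel (C := C))

/-- Convert a path to a morphism of the free category. -/
def toHom {a b : SL C} (p : Quiver.Path a b) :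
    @Quiver.Hom (FreeSL C) CategoryStruct.toQuiver a b := p

/-- The morphism of `SList C` determined by a path of generators. -/
def qm {a b : SL C} (p : Quiver.Path a b) : SList.mk a.toList ⟶ SList.mk b.toList :=
  QF.map (toHom p)

lemma qm_comp {a b c : SL C} (p : Quiver.Path a b) (q : Quiver.Path b c) :
    qm (p.comp q) = qm p ≫ qm q :=
  QF.map_comp (toHom p) (toHom q)

lemma qm_nil (a : SL C) :
    qm (Quiver.Path.nil : Quiver.Path a a) = 𝟙 (SList.mk a.toList) :=
  QF.map_id a

lemma qm_cons {a b c : SL C} (p : Quiver.Path a b) (g : b ⟶ c) :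
    qm (p.cons g) = qm p ≫ qm (Quiver.Hom.toPath g) :=
  qm_comp p (Quiver.Hom.toPath g)

lemma qm_sound {a b : SL C} {p q : Quiver.Path a b} (h : SListDev.Rel p q) :
    qm p = qm q :=
  CategoryTheory.Quotient.sound _ h

lemma swap_swap_hom (x y : C) (l : List C) :
    qm (swapPath x y l) ≫ qm (swapPath y x l) = 𝟙 (SList.mk (x :: y :: l)) := by
  rw [← qm_comp, qm_sound (Rel.swap_swap x y l), qm_nil]

lemma nat_hom (X Y : C) {l l' : SL C} (f : Quiver.Path l l') :
    qm (swapPath X Y l.toList) ≫ qm (consMap Y (consMap X f)) =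
      qm (consMap X (consMap Y f)) ≫ qm (swapPath X Y l'.toList) := by
  erw [← qm_comp, ← qm_comp]
  exact qm_sound (Rel.swap_naturality X Y f)

lemma hex_hom (X Y Z : C) (l : List C) :
    qm (swapPath X Y (Z :: l)) ≫ qm (consMap Y (swapPath X Z l)) ≫ qm (swapPath Y Z (X :: l)) =
      qm (consMap X (swapPath Y Z l)) ≫ qm (swapPath X Z (Y :: l)) ≫
        qm (consMap Z (swapPath X Y l)) := by
  have h := qm_sound (Rel.hexagon X Y Z l)
  exact ((qm_comp _ _).trans (whisker_eq _ (qm_comp _ _))).symm.trans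
    (h.trans ((qm_comp _ _).trans (whisker_eq _ (qm_comp _ _))))

/-- The prefunctor underlying the `cons` functor. -/
def consPre (z : C) : SL C ⥤q SList C where
  obj a := SList.mk (z :: a.toList)
  map g := qm (Quiver.Hom.toPath (Gen.cons z g))

/-- The `cons` functor on the free category. -/
def consFree (z : C) : FreeSL C ⥤ SList C := Paths.lift (consPre z)

lemma consFree_map (z : C) {a b : SL C} (p : Quiver.Path a b) :
    (consFree z).map (toHom p) = qm (consMap z p) := by
  induction p with
  | nil =>
      rw [consMap_nil]
      exact ((consFree z).map_id a).trans (qm_nil _).symm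
  | cons p g ih =>
      rw [show (consFree z).map (toHom (p.cons g)) = (consFree z).map (toHom p) ≫
          (consFree z).map (toHom (Quiver.Hom.toPath g)) from
          (consFree z).map_comp (toHom p) (toHom (Quiver.Hom.toPath g)), ih, consMap_cons]
      erw [qm_cons]
      exact congrArg (fun h => qm (consMap z p) ≫ h) (Paths.lift_toPath (consPre z) g)

/-- The `cons` functor on the category of symmetric lists. -/
def consF (z : C) : SList C ⥤ SList C :=
  CategoryTheory.Quotient.lift _ (consFree z) (fun _ _ f g h => by
    rw [show (consFree z).map f = qm (consMap z f) from consFree_map z f,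
      show (consFree z).map g = qm (consMap z g) from consFree_map z g]
    exact qm_sound (Rel.cons z f g h))

lemma consF_map (z : C) {a b : SL C} (p : Quiver.Path a b) :
    (consF z).map (qm p) = qm (consMap z p) := by
  rw [show (consF z).map (qm p) = (consFree z).map (toHom p) from
    CategoryTheory.Quotient.lift_map_functor_map _ (consFree z) _ (toHom p)]
  exact consFree_map z p

end SListAux

namespace SListAux

open SListDev CategoryTheory

variable {C : Type u}

@[simp] lemma SL_toList (t : List C) : (⟨t⟩ : SL C).toList = t := rfl

@[simp] lemma downPath_zero (x : C) (l : List C) :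
    downPath x 0 l = Quiver.Path.nil := rfl

lemma consMap_toPath (z : C) {a b : SL C} (g : a ⟶ b) :
    consMap z (Quiver.Hom.toPath g) = Quiver.Hom.toPath (Gen.cons z g) := by
  simp [Quiver.Hom.toPath]; rfl

lemma nat_hom' (X Y : C) {t t' : List C} (f : Quiver.Path (⟨t⟩ : SL C) ⟨t'⟩) :
    qm (swapPath X Y t) ≫ qm (consMap Y (consMap X f)) =
      qm (consMap X (consMap Y f)) ≫ qm (swapPath X Y t') :=
  nat_hom X Y f

lemma downPath_gen {c m : SL C} (g : Gen c m) :
    ∀ (x : C) (i : ℕ) (l : List C), i ≤ l.length → ∀ (h : c = (⟨insertL i x l⟩ : SL C)),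
    ∃ (i' : ℕ) (l' : List C) (hm : m = (⟨insertL i' x l'⟩ : SL C))
      (q : Quiver.Path (⟨l⟩ : SL C) ⟨l'⟩),
      i' ≤ l'.length ∧
      qm (downPath x i l) ≫ qm (Quiver.Hom.toPath (h ▸ g : Gen ⟨insertL i x l⟩ m)) ≫
          eqToHom (congrArg (fun s : SL C => SList.mk s.toList) hm) =
        qm (consMap x q) ≫ qm (downPath x i' l') := by
  induction g with
  | swap a y t =>
      intro x i l hi h
      have hl : a :: y :: t = insertL i x l := congrArg SL.toList h
      match i, l, hi with
      | 0, l, hi =>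
          simp only [insertL, List.cons.injEq] at hl
          obtain ⟨rfl, rfl⟩ := hl
          refine ⟨1, y :: t, rfl, Quiver.Path.nil, by simp, ?_⟩
          show qm (downPath a 0 (y :: t)) ≫ qm (swapPath a y t) ≫ 𝟙 _ =
            qm (consMap a Quiver.Path.nil) ≫
              qm ((swapPath a y t).comp (consMap y (downPath a 0 t)))
          simp [qm_nil, qm_comp, consMap_nil]
          erw [consMap_nil, Quiver.Path.comp_nil, qm_nil, Category.id_comp]
          rfl
      | 1, a' :: t', hi =>
          simp only [insertL, List.cons.injEq] at hl
          obtain ⟨rfl, rfl, rfl⟩ := hl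
          refine ⟨0, a :: t, rfl, Quiver.Path.nil, by simp, ?_⟩
          show qm ((swapPath y a t).comp (consMap a (downPath y 0 t))) ≫
              qm (swapPath a y t) ≫ 𝟙 _ =
            qm (consMap y Quiver.Path.nil) ≫ qm (downPath y 0 (a :: t))
          simp only [downPath_zero, consMap_nil, qm_comp, qm_nil, Category.comp_id,
            Category.id_comp]
          erw [consMap_nil, Quiver.Path.comp_nil, qm_nil]
          exact swap_swap_hom y a t
      | (j+2), a' :: b' :: t₀, hi =>
          simp only [insertL, List.cons.injEq] at hl
          obtain ⟨rfl, rfl, rfl⟩ := hl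
          have hj : j ≤ t₀.length := by simpa using hi
          refine ⟨j + 2, y :: a :: t₀, rfl, Quiver.Hom.toPath (Gen.swap a y t₀),
            by simpa using hj, ?_⟩
          show qm ((swapPath x a (y :: t₀)).comp (consMap a ((swapPath x y t₀).comp
              (consMap y (downPath x j t₀))))) ≫
              qm (swapPath a y (insertL j x t₀)) ≫ 𝟙 _ =
            qm (consMap x (swapPath a y t₀)) ≫
              qm ((swapPath x y (a :: t₀)).comp (consMap y ((swapPath x a t₀).comp
                (consMap a (downPath x j t₀)))))
          erw [consMap_comp, consMap_comp, qm_comp, qm_comp, qm_comp, qm_comp]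
          simp only [Category.assoc, Category.comp_id]
          have hA : qm (consMap a (consMap y (downPath x j t₀))) ≫
              qm (swapPath a y (insertL j x t₀)) =
              qm (swapPath a y (x :: t₀)) ≫ qm (consMap y (consMap a (downPath x j t₀))) :=
            (nat_hom' a y (downPath x j t₀)).symm
          slice_lhs 3 4 => erw [hA]
          have hB := hex_hom x a y t₀
          erw [reassoc_of% hB]
          exact (Category.assoc _ _ _).trans (whisker_eq _ (Category.assoc _ _ _))
  | @cons z l₀ l₀' g₀ ih =>
      intro x i l hi h
      have hl : z :: l₀ = insertL i x l := congrArg SL.toList h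
      match i, l, hi with
      | 0, l, hi =>
          simp only [insertL, List.cons.injEq] at hl
          obtain ⟨rfl, rfl⟩ := hl
          refine ⟨0, l₀', rfl, Quiver.Hom.toPath g₀, by simp, ?_⟩
          show qm (downPath z 0 l₀) ≫ qm (Quiver.Hom.toPath (Gen.cons z g₀)) ≫ 𝟙 _ =
            qm (consMap z (Quiver.Hom.toPath g₀)) ≫ qm (downPath z 0 l₀')
          simp [qm_nil, consMap_toPath]
          rfl
      | (j+1), a :: t, hi =>
          simp only [insertL, List.cons.injEq] at hl
          obtain ⟨rfl, rfl⟩ := hl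
          have hj : j ≤ t.length := by simpa using hi
          obtain ⟨i₀, t'', hm₀, q₀, hle₀, eq₀⟩ := ih x j t hj rfl
          have hl₀' : l₀' = insertL i₀ x t'' := congrArg SL.toList hm₀
          subst hl₀'
          refine ⟨i₀ + 1, z :: t'', rfl, consMap z q₀, by simpa using hle₀, ?_⟩
          show qm ((swapPath x z t).comp (consMap z (downPath x j t))) ≫
              qm (Quiver.Hom.toPath (Gen.cons z g₀)) ≫ 𝟙 _ =
            qm (consMap x (consMap z q₀)) ≫
              qm ((swapPath x z t'').comp (consMap z (downPath x i₀ t'')))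
          have eq₀' : qm ((downPath x j t).comp (Quiver.Hom.toPath g₀)) =
              qm ((consMap x q₀).comp (downPath x i₀ t'')) := by
            erw [qm_comp, qm_comp]
            exact (Category.comp_id _).symm.trans eq₀ |>.trans rfl
          have eqc : qm (consMap z ((downPath x j t).comp (Quiver.Hom.toPath g₀))) =
              qm (consMap z ((consMap x q₀).comp (downPath x i₀ t''))) := by
            rw [← consF_map, ← consF_map, eq₀']
            rfl
          have s1 : qm ((swapPath x z t).comp (consMap z (downPath x j t))) ≫
              qm (Quiver.Hom.toPath (Gen.cons z g₀)) ≫ 𝟙 _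
              = qm (swapPath x z t) ≫
                  qm (consMap z ((downPath x j t).comp (Quiver.Hom.toPath g₀))) := by
                erw [← consMap_toPath, consMap_comp, qm_comp, qm_comp, Category.comp_id,
                  Category.assoc]
                rfl
          have s2 : qm (swapPath x z t) ≫
                  qm (consMap z ((downPath x j t).comp (Quiver.Hom.toPath g₀))) =
                qm (swapPath x z t) ≫
                  qm (consMap z ((consMap x q₀).comp (downPath x i₀ t''))) := by erw [eqc]; rfl
          have s3 : qm (swapPath x z t) ≫
                  qm (consMap z ((consMap x q₀).comp (downPath x i₀ t''))) =
                (qm (swapPath x z t) ≫ qm (consMap z (consMap x q₀))) ≫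
                  qm (consMap z (downPath x i₀ t'')) := by
                erw [consMap_comp, qm_comp, Category.assoc]
          have s4 : (qm (swapPath x z t) ≫ qm (consMap z (consMap x q₀))) ≫
                  qm (consMap z (downPath x i₀ t'')) =
                (qm (consMap x (consMap z q₀)) ≫ qm (swapPath x z t'')) ≫
                  qm (consMap z (downPath x i₀ t'')) := by erw [nat_hom' x z q₀]; rfl
          have s5 : (qm (consMap x (consMap z q₀)) ≫ qm (swapPath x z t'')) ≫
                  qm (consMap z (downPath x i₀ t'')) =
                qm (consMap x (consMap z q₀)) ≫
                  qm ((swapPath x z t'').comp (consMap z (downPath x i₀ t''))) := by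
                erw [qm_comp, Category.assoc]
          exact s1.trans (s2.trans (s3.trans (s4.trans s5)))

end SListAux

namespace SListAux

open SListDev CategoryTheory

variable {C : Type u}

/-- Normal form: every path out of `x :: l₀` factors as a path on the tail followed by
an insertion of `x`. -/
lemma pathNF (x : C) (l₀ : List C) :
    ∀ {m : SL C} (p : Quiver.Path (⟨x :: l₀⟩ : SL C) m),
    ∃ (i : ℕ) (l' : List C) (hm : m = (⟨insertL i x l'⟩ : SL C))
      (q : Quiver.Path (⟨l₀⟩ : SL C) ⟨l'⟩),
      i ≤ l'.length ∧
      qm p ≫ eqToHom (congrArg (fun s : SL C => SList.mk s.toList) hm) =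
        qm (consMap x q) ≫ qm (downPath x i l') := by
  intro m p
  induction p with
  | nil =>
      refine ⟨0, l₀, rfl, Quiver.Path.nil, by simp, ?_⟩
      show qm Quiver.Path.nil ≫ 𝟙 _ = qm (consMap x Quiver.Path.nil) ≫ qm (downPath x 0 l₀)
      simp [qm_nil]
      exact (qm_nil _).symm
  | cons p g ih =>
      obtain ⟨i, l', hm, q, hle, eq⟩ := ih
      subst hm
      obtain ⟨i', l'', hm', q', hle', eq'⟩ := downPath_gen g x i l' hle rfl
      refine ⟨i', l'', hm', q.comp q', hle', ?_⟩
      have eq1 : qm p = qm (consMap x q) ≫ qm (downPath x i l') := by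
        simpa using eq
      have eq'' : qm (downPath x i l') ≫ qm (Quiver.Hom.toPath g) ≫
          eqToHom (congrArg (fun s : SL C => SList.mk s.toList) hm') =
          qm (consMap x q') ≫ qm (downPath x i' l'') := eq'
      have t1 : qm (p.cons g) ≫ eqToHom (congrArg (fun s : SL C => SList.mk s.toList) hm')
          = qm (consMap x q) ≫ (qm (downPath x i l') ≫ qm (Quiver.Hom.toPath g) ≫
              eqToHom (congrArg (fun s : SL C => SList.mk s.toList) hm')) := by
            rw [qm_cons, eq1]
            exact (Category.assoc _ _ _).trans (Category.assoc _ _ _)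
      have t2 : qm (consMap x q) ≫ (qm (downPath x i l') ≫ qm (Quiver.Hom.toPath g) ≫
              eqToHom (congrArg (fun s : SL C => SList.mk s.toList) hm')) =
          qm (consMap x q) ≫ (qm (consMap x q') ≫ qm (downPath x i' l'')) := by erw [eq'']
      have t3 : qm (consMap x q) ≫ (qm (consMap x q') ≫ qm (downPath x i' l'')) =
          qm (consMap x (q.comp q')) ≫ qm (downPath x i' l'') := by
            erw [consMap_comp, qm_comp, Category.assoc]
      exact t1.trans (t2.trans t3)

/-- Every path out of the empty list is trivial. -/
lemma path_from_nil : ∀ {m : SL C} (p : Quiver.Path (⟨([] : List C)⟩ : SL C) m),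
    ∃ (hm : m = (⟨([] : List C)⟩ : SL C)), HEq p (Quiver.Path.nil :
      Quiver.Path (⟨([] : List C)⟩ : SL C) ⟨([] : List C)⟩) := by
  intro m p
  induction p with
  | nil => exact ⟨rfl, HEq.rfl⟩
  | cons p g ih =>
      obtain ⟨rfl, hp⟩ := ih
      exact nomatch g

/-- Morphisms into a duplicate-free symmetric list are unique. -/
lemma hom_subsingleton :
    ∀ (ln m : List C), m.Nodup → ∀ f g : (SList.mk ln ⟶ SList.mk m), f = g := by
  intro ln
  induction ln with
  | nil =>
      intro m hm f g
      obtain ⟨pf, hpf⟩ := QF.map_surjective (X := ⟨[]⟩) (Y := ⟨m⟩) f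
      obtain ⟨pg, hpg⟩ := QF.map_surjective (X := ⟨[]⟩) (Y := ⟨m⟩) g
      obtain ⟨hm', hp⟩ := path_from_nil pf
      have hm'' : m = [] := congrArg SL.toList hm'
      subst hm''
      obtain ⟨_, hp'⟩ := path_from_nil pg
      rw [← hpf, ← hpg, eq_of_heq hp, eq_of_heq hp']
  | cons x t ih =>
      intro m hm f g
      obtain ⟨pf, hpf⟩ := QF.map_surjective (X := ⟨x :: t⟩) (Y := ⟨m⟩) f
      obtain ⟨pg, hpg⟩ := QF.map_surjective (X := ⟨x :: t⟩) (Y := ⟨m⟩) g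
      obtain ⟨i, l', hm', q, hle, eq⟩ := pathNF x t pf
      obtain ⟨i₂, l₂, hm₂, q₂, hle₂, eq₂⟩ := pathNF x t pg
      have hml : m = insertL i x l' := congrArg SL.toList hm'
      have hml₂ : m = insertL i₂ x l₂ := congrArg SL.toList hm₂
      subst hml
      -- nodup facts
      have hperm : (insertL i x l').Perm (x :: l') := insertL_perm x i l'
      have hnd : (x :: l').Nodup := hperm.nodup_iff.mp hm
      have hx : x ∉ l' := (List.nodup_cons.mp hnd).1
      have hndl : l'.Nodup := (List.nodup_cons.mp hnd).2
      have hperm₂ : (insertL i₂ x l₂).Perm (x :: l₂) := insertL_perm x i₂ l₂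
      have hnd₂ : (x :: l₂).Nodup := hperm₂.nodup_iff.mp (hml₂ ▸ hm)
      have hx₂ : x ∉ l₂ := (List.nodup_cons.mp hnd₂).1
      obtain ⟨rfl, rfl⟩ := insertL_inj x i i₂ l' l₂ hle hle₂ hx hx₂ hml₂
      -- apply induction hypothesis to q, q₂
      have hq : qm q = qm q₂ := ih l' hndl (qm q) (qm q₂)
      have hcons : qm (consMap x q) = qm (consMap x q₂) := by
        rw [← consF_map, ← consF_map, hq]
      have e1 : qm pf = qm (consMap x q) ≫ qm (downPath x i l') := by simpa using eq
      have e2 : qm pg = qm (consMap x q₂) ≫ qm (downPath x i l') := by simpa using eq₂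
      rw [← hpf, ← hpg]
      show qm pf = qm pg
      rw [e1, e2, hcons]

end SListAux

namespace SListAux

open SListDev CategoryTheory

variable {C : Type u}

/-- Permuted lists give isomorphic symmetric lists. -/
lemma perm_iso {l₁ l₂ : List C} (h : l₁.Perm l₂) :
    Nonempty (SList.mk l₁ ≅ SList.mk l₂) := by
  induction h with
  | nil => exact ⟨Iso.refl _⟩
  | cons a _ ih => obtain ⟨e⟩ := ih; exact ⟨(consF a).mapIso e⟩
  | swap a b l =>
      exact ⟨{ hom := qm (swapPath b a l), inv := qm (swapPath a b l),
               hom_inv_id := swap_swap_hom b a l, inv_hom_id := swap_swap_hom a b l }⟩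
  | trans _ _ ih1 ih2 =>
      obtain ⟨e1⟩ := ih1; obtain ⟨e2⟩ := ih2; exact ⟨e1.trans e2⟩

lemma flatMap_replicate_filter {A : Type v} (p : A → Prop) [DecidablePred p] (f : A → ℕ)
    (hf : ∀ a, f a = if p a then 1 else 0) :
    ∀ u : List A, (u.flatMap fun a => List.replicate (f a) a) = u.filter fun a => p a
  | [] => rfl
  | a :: u => by
      rw [List.flatMap_cons, List.filter_cons, flatMap_replicate_filter p f hf u, hf a]
      by_cases hp : p a <;> simp [hp]

lemma flatMap_single {A B : Type v} (f : A → B) :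
    ∀ u : List A, (u.flatMap fun a => [f a]) = u.map f
  | [] => rfl
  | a :: u => by rw [List.flatMap_cons, List.map_cons, flatMap_single f u]; rfl

lemma count_single {A B : Type v} [DecidableEq B] (h : A → B) (a : A) (y : B) :
    (SList.Vmap h a).mult.count y = if h a = y then 1 else 0 := by
  simp only [SList.Vmap, SList.mult, SList.mk, SList.toList]
  rw [show (([h a] : List B) : Multiset B) = {h a} from rfl, Multiset.count_singleton]
  by_cases hh : h a = y
  · simp [hh]
  · rw [if_neg hh, if_neg (fun hy => hh hy.symm)]

end SListAux

/-- given a cartesian square of finite sets with top `t : I → J`,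
left `l : I → K`, right `r : J → L`, bottom `b : K → L`, the Kleisli composites
`U(r) ∘ V(b)` and `V(t) ∘ U(l)` (as functions `K → SList J`) are pointwise isomorphic:
for every `k`, both underlying multisets equal the fiber `r⁻¹({b k})`, both symmetric
lists are linear, and there is a unique isomorphism between them. -/
theorem SList.beckChevalley_pointwise {I J K L : Type u}
    [Fintype I] [DecidableEq I] [Fintype J] [DecidableEq J]
    [Fintype K] [DecidableEq K] [Fintype L] [DecidableEq L]
    (t : I → J) (l : I → K) (r : J → L) (b : K → L)
    (comm : ∀ i, b (l i) = r (t i))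
    (cartesian : ∀ (j : J) (k : K), r j = b k → ∃! i : I, t i = j ∧ l i = k)
    (k : K) :
    (SList.thetaObj (SList.Umap r) (SList.Vmap b k)).mult =
        (Finset.univ.filter fun j => r j = b k).val ∧
    (SList.thetaObj (SList.Vmap t) (SList.Umap l k)).mult =
        (Finset.univ.filter fun j => r j = b k).val ∧
    (SList.thetaObj (SList.Umap r) (SList.Vmap b k)).toList.Nodup ∧
    (SList.thetaObj (SList.Vmap t) (SList.Umap l k)).toList.Nodup ∧
    Nonempty ((SList.thetaObj (SList.Umap r) (SList.Vmap b k)) ≅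
        (SList.thetaObj (SList.Vmap t) (SList.Umap l k))) ∧
    Subsingleton ((SList.thetaObj (SList.Umap r) (SList.Vmap b k)) ≅
        (SList.thetaObj (SList.Vmap t) (SList.Umap l k))) := by
  have hUr : ∀ y, (SList.Umap r y).toList =
      Finset.univ.toList.filter (fun j => r j = y) := fun y =>
    SListAux.flatMap_replicate_filter (fun j => r j = y) _
      (fun j => SListAux.count_single r j y) _
  have hUl : (SList.Umap l k).toList =
      Finset.univ.toList.filter (fun i => l i = k) :=
    SListAux.flatMap_replicate_filter (fun i => l i = k) _
      (fun i => SListAux.count_single l i k) _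
  have hA : (SList.thetaObj (SList.Umap r) (SList.Vmap b k)).toList =
      Finset.univ.toList.filter (fun j => r j = b k) := by
    show ([b k].flatMap fun y => (SList.Umap r y).toList) = _
    rw [List.flatMap_cons, List.flatMap_nil, List.append_nil, hUr (b k)]
  have hB : (SList.thetaObj (SList.Vmap t) (SList.Umap l k)).toList =
      (Finset.univ.toList.filter (fun i => l i = k)).map t := by
    show ((SList.Umap l k).toList.flatMap fun i => [t i]) = _
    rw [hUl, SListAux.flatMap_single]
  have hAm : (SList.thetaObj (SList.Umap r) (SList.Vmap b k)).mult =
      (Finset.univ.filter fun j => r j = b k).val := by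
    show ((SList.thetaObj (SList.Umap r) (SList.Vmap b k)).toList : Multiset J) = _
    rw [hA, Finset.filter_val, ← Finset.coe_toList (Finset.univ : Finset J),
      Multiset.filter_coe]
  have hAnd : (SList.thetaObj (SList.Umap r) (SList.Vmap b k)).toList.Nodup := by
    rw [hA]; exact (Finset.nodup_toList _).filter _
  have tinj : ∀ i ∈ Finset.univ.toList.filter (fun i => l i = k),
      ∀ i' ∈ Finset.univ.toList.filter (fun i => l i = k), t i = t i' → i = i' := by
    intro i hi i' hi' ht
    have hli : l i = k := by simpa using (List.mem_filter.mp hi).2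
    have hli' : l i' = k := by simpa using (List.mem_filter.mp hi').2
    have hrb : r (t i) = b k := by rw [← comm i, hli]
    obtain ⟨i₀, -, huniq⟩ := cartesian (t i) k hrb
    have h1 := huniq i ⟨rfl, hli⟩
    have h2 := huniq i' ⟨ht.symm, hli'⟩
    rw [h1, h2]
  have hBnd : (SList.thetaObj (SList.Vmap t) (SList.Umap l k)).toList.Nodup := by
    rw [hB]
    exact List.Nodup.map_on tinj ((Finset.nodup_toList _).filter _)
  have hBm : (SList.thetaObj (SList.Vmap t) (SList.Umap l k)).mult =
      (Finset.univ.filter fun j => r j = b k).val := by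
    have hnd1 : (SList.thetaObj (SList.Vmap t) (SList.Umap l k)).mult.Nodup := by
      show ((SList.thetaObj (SList.Vmap t) (SList.Umap l k)).toList : Multiset J).Nodup
      rw [Multiset.coe_nodup]; exact hBnd
    have hnd2 : ((Finset.univ.filter fun j => r j = b k).val).Nodup :=
      (Finset.univ.filter fun j => r j = b k).nodup
    refine (Multiset.Nodup.ext hnd1 hnd2).mpr ?_
    intro j
    show j ∈ ((SList.thetaObj (SList.Vmap t) (SList.Umap l k)).toList : Multiset J) ↔ _
    rw [Multiset.mem_coe, hB, ← Finset.mem_def, Finset.mem_filter]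
    constructor
    · intro hmem
      rw [List.mem_map] at hmem
      obtain ⟨i, hi, rfl⟩ := hmem
      have hli : l i = k := by simpa using (List.mem_filter.mp hi).2
      exact ⟨Finset.mem_univ _, by rw [← comm i, hli]⟩
    · rintro ⟨-, hrj⟩
      obtain ⟨i, ⟨hti, hli⟩, -⟩ := cartesian j k hrj
      subst hti
      exact List.mem_map.mpr ⟨i, List.mem_filter.mpr ⟨by simp, by simp [hli]⟩, rfl⟩
  have hperm : (SList.thetaObj (SList.Umap r) (SList.Vmap b k)).toList.Perm
      (SList.thetaObj (SList.Vmap t) (SList.Umap l k)).toList := by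
    rw [← Multiset.coe_eq_coe]
    show (SList.thetaObj (SList.Umap r) (SList.Vmap b k)).mult =
      (SList.thetaObj (SList.Vmap t) (SList.Umap l k)).mult
    rw [hAm, hBm]
  refine ⟨hAm, hBm, hAnd, hBnd, SListAux.perm_iso hperm, ?_⟩
  constructor
  intro e1 e2
  exact CategoryTheory.Iso.ext
    (SListAux.hom_subsingleton
      (SList.thetaObj (SList.Umap r) (SList.Vmap b k)).toList
      (SList.thetaObj (SList.Vmap t) (SList.Umap l k)).toList hBnd e1.hom e2.hom)
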